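/- Fix λ₀, v, u ∈ ℂ, j ∈ ℤ, and ε ∈ {+1,−1}, and assume θ_{11}(η,τ), θ_{10}(η,τ), θ_{00}(η,τ), θ_{01}(η,τ) are all nonzero. Let N := adj(M_{λ₀+4(j+ε)lη}(v)) · L(u) · M_{λ₀+4jlη}(v). Then the (2,2) entry of N satisfies θ_{11}(λ₀+4(j+ε)lη,τ) · (N_{22} ω_{ε(λ₀+4jlη)}(u; εv))(z) = det(M_{λ₀+4(j+ε)lη}(v)) · 2θ_{11}(u−2lη,τ) · θ_{11}(λ₀+4jlη,τ) · ω_{ε(λ₀+4jlη)}(u+2η; εv)(z) for every z ∈ ℂ with θ_{11}(2z,τ) ≠ 0; equivalently, when θ_{11}(λ₀+4(j+ε)lη,τ) ≠ 0, the twisted matrix element δ acts on ω with eigenfactor 2θ_{11}(u−2lη,τ)·θ_{11}(λ₀+4jlη,τ)/θ_{11}(λ₀+4(j+ε)lη,τ) and shift u ↦ u+2η. -/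

import Mathlib

noncomputable section

open Complex

/-- Theta function with characteristics `θ_{ab}(z,τ)`. -/
def theta (a b : ℝ) (z τ : ℂ) : ℂ :=
  ∑' n : ℤ, Complex.exp ((Real.pi : ℂ) * Complex.I * ((a : ℂ)/2 + (n : ℂ))^2 * τ +
    2 * (Real.pi : ℂ) * Complex.I * ((a : ℂ)/2 + (n : ℂ)) * ((b : ℂ)/2 + z))

/-- `[z;a]_k := ∏_{j=0}^{k-1} θ₁₁(z+a+2jη,τ) θ₁₁(-z+a+2jη,τ)`. -/
def brK (η τ z a : ℂ) (k : ℕ) : ℂ :=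
  ∏ j ∈ Finset.range k,
    theta 1 1 (z + a + 2*(j:ℂ)*η) τ * theta 1 1 (-z + a + 2*(j:ℂ)*η) τ

/-- `f_ε(λ,u,z) := [z;(ελ+u)/2+(-l+1)η]_{2l}`, with `tl = 2l`. -/
def fEps (η τ l : ℂ) (tl : ℕ) (ε lam u z : ℂ) : ℂ :=
  brK η τ z ((ε*lam + u)/2 + (-l+1)*η) tl

/-- `ω_λ(u;v)(z) := [z;(λ+u-v)/2+(-l+1)η]_{2l}`. -/
def omegaFn (η τ l : ℂ) (tl : ℕ) (lam u v z : ℂ) : ℂ :=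
  brK η τ z ((lam + u - v)/2 + (-l+1)*η) tl

def s0f (η τ z : ℂ) : ℂ := theta 1 1 η τ * theta 1 1 (2*z) τ
def s1f (η τ z : ℂ) : ℂ := theta 1 0 η τ * theta 1 0 (2*z) τ
def s2f (η τ z : ℂ) : ℂ := Complex.I * theta 0 0 η τ * theta 0 0 (2*z) τ
def s3f (η τ z : ℂ) : ℂ := theta 0 1 η τ * theta 0 1 (2*z) τ

/-- The difference operator `ρ^l(S^a)` associated to the coefficient function `s`. -/
def rhoS (η τ l : ℂ) (s : ℂ → ℂ) : (ℂ → ℂ) →ₗ[ℂ] (ℂ → ℂ) where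
  toFun f := fun z =>
    (s (z - l*η) * f (z + η) - s (-z - l*η) * f (z - η)) / theta 1 1 (2*z) τ
  map_add' f g := by
    funext z
    simp only [Pi.add_apply]
    ring
  map_smul' c f := by
    funext z
    simp only [Pi.smul_apply, smul_eq_mul, RingHom.id_apply]
    ring

def W0 (η τ u : ℂ) : ℂ := theta 1 1 u τ / theta 1 1 η τ
def W1 (η τ u : ℂ) : ℂ := theta 1 0 u τ / theta 1 0 η τ
def W2 (η τ u : ℂ) : ℂ := theta 0 0 u τ / theta 0 0 η τ
def W3 (η τ u : ℂ) : ℂ := theta 0 1 u τ / theta 0 1 η τ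

/-- `θ^{(2l)}_{00}(u) := ∏_{j=0}^{2l-1} θ₀₀(u+(2j-2l+1)η,τ)`, with `tl = 2l`. -/
def theta2l (η τ : ℂ) (tl : ℕ) (u : ℂ) : ℂ :=
  ∏ j ∈ Finset.range tl, theta 0 0 (u + (2*(j:ℂ) - (tl:ℂ) + 1)*η) τ

/-- The gauge transformation matrix `M_λ(v)`. -/
def Mlam (τ lam v : ℂ) : Matrix (Fin 2) (Fin 2) ℂ :=
  !![-theta 0 0 ((lam - v)/2) (τ/2), -theta 0 0 ((lam + v)/2) (τ/2);
     theta 0 1 ((lam - v)/2) (τ/2), theta 0 1 ((lam + v)/2) (τ/2)]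

/-- The `L`-operator as a 2×2 matrix of difference operators. -/
def LopM (η τ l u : ℂ) : Matrix (Fin 2) (Fin 2) (Module.End ℂ (ℂ → ℂ)) :=
  !![W0 η τ u • rhoS η τ l (s0f η τ) + W3 η τ u • rhoS η τ l (s3f η τ),
     W1 η τ u • rhoS η τ l (s1f η τ) - (Complex.I * W2 η τ u) • rhoS η τ l (s2f η τ);
     W1 η τ u • rhoS η τ l (s1f η τ) + (Complex.I * W2 η τ u) • rhoS η τ l (s2f η τ),
     W0 η τ u • rhoS η τ l (s0f η τ) - W3 η τ u • rhoS η τ l (s3f η τ)]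

/-- `N := adj(M_{λ₀+4(j+ε)lη}(v)) · L(u) · M_{λ₀+4jlη}(v)`. -/
def NMat (η τ l lam0 v u : ℂ) (j : ℤ) (ε : ℂ) :
    Matrix (Fin 2) (Fin 2) (Module.End ℂ (ℂ → ℂ)) :=
  ((Mlam τ (lam0 + 4*((j:ℂ)+ε)*l*η) v).adjugate).map
      (algebraMap ℂ (Module.End ℂ (ℂ → ℂ))) *
    LopM η τ l u *
    (Mlam τ (lam0 + 4*(j:ℂ)*l*η) v).map (algebraMap ℂ (Module.End ℂ (ℂ → ℂ)))

/-- The kernel `μ(z,w)` of the Sklyanin form. -/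
def muK (η τ : ℂ) (tl : ℕ) (z w : ℂ) : ℂ :=
  theta 1 1 (2*z) τ * theta 1 1 (2*w) τ /
    ∏ j ∈ Finset.range (tl + 2),
      (theta 0 0 (z + w + (2*(j:ℂ) - (tl:ℂ) - 1)*η) τ *
       theta 0 0 (z - w + (2*(j:ℂ) - (tl:ℂ) - 1)*η) τ)

/-- Integrand of the Sklyanin form. -/
def sklIntegrand (η τ : ℂ) (tl : ℕ) (f g : ℂ → ℂ) (x y : ℝ) : ℂ :=
  (starRingEnd ℂ) (f ((x:ℂ) + (y:ℂ)*Complex.I)) * g ((x:ℂ) + (y:ℂ)*Complex.I) *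
    muK η τ tl ((x:ℂ) + (y:ℂ)*Complex.I) ((x:ℂ) - (y:ℂ)*Complex.I)

/-- The Sklyanin form `⟨f,g⟩` (with `τ = i t₀`). -/
def sklForm (η τ : ℂ) (tl : ℕ) (t0 : ℝ) (f g : ℂ → ℂ) : ℂ :=
  ∫ x in (0:ℝ)..1, ∫ y in (0:ℝ)..t0, sklIntegrand η τ tl f g x y

/-- The constant `C_{2l}`. -/
def C2l (η τ : ℂ) (tl : ℕ) : ℂ :=
  (-2*η * Complex.exp (3*(Real.pi:ℂ)*Complex.I*τ/4)) /
    (theta 1 1 (2*((tl:ℂ)+1)*η) τ *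
      ∏' j : ℕ, (1 - Complex.exp (2*(Real.pi:ℂ)*Complex.I*((j:ℂ)+1)*τ))^3)
def thetaTerm (a b : ℝ) (z τ : ℂ) (n : ℤ) : ℂ :=
  Complex.exp ((Real.pi : ℂ) * Complex.I * ((a : ℂ)/2 + (n : ℂ))^2 * τ +
    2 * (Real.pi : ℂ) * Complex.I * ((a : ℂ)/2 + (n : ℂ)) * ((b : ℂ)/2 + z))

lemma theta_eq (a b : ℝ) (z τ : ℂ) : theta a b z τ = ∑' n : ℤ, thetaTerm a b z τ n := rfl

lemma thetaTerm_eq (a b : ℝ) (z τ : ℂ) (n : ℤ) :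
    thetaTerm a b z τ n = Complex.exp ((Real.pi : ℂ) * Complex.I * (a:ℂ)^2 * τ / 4 +
      (Real.pi : ℂ) * Complex.I * (a:ℂ) * ((b:ℂ)/2 + z)) *
      jacobiTheta₂_term n ((b:ℂ)/2 + z + (a:ℂ)*τ/2) τ := by
  rw [thetaTerm, jacobiTheta₂_term, ← Complex.exp_add]
  congr 1
  ring

lemma summable_norm_jacobiTerm {τ : ℂ} (hτ : 0 < τ.im) (z : ℂ) :
    Summable fun n : ℤ => ‖jacobiTheta₂_term n z τ‖ := by
  apply Summable.of_nonneg_of_le (fun n => norm_nonneg _)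
    (fun n => norm_jacobiTheta₂_term_le hτ (le_refl |z.im|) (le_refl τ.im) n)
  simpa using summable_pow_mul_jacobiTheta₂_term_bound |z.im| hτ 0

lemma summable_norm_thetaTerm {τ : ℂ} (hτ : 0 < τ.im) (a b : ℝ) (z : ℂ) :
    Summable fun n : ℤ => ‖thetaTerm a b z τ n‖ := by
  simp_rw [thetaTerm_eq, norm_mul]
  exact (summable_norm_jacobiTerm hτ _).mul_left _

lemma hasSum_theta {τ : ℂ} (hτ : 0 < τ.im) (a b : ℝ) (z : ℂ) :
    HasSum (thetaTerm a b z τ) (theta a b z τ) :=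
  ((summable_norm_thetaTerm hτ a b z).of_norm).hasSum

lemma theta_b_add_two (a b : ℝ) (z τ : ℂ) : theta a (b+2) z τ = theta a b (z+1) τ := by
  apply tsum_congr; intro n; congr 1; push_cast; ring

lemma theta_b_sub_two (a b : ℝ) (z τ : ℂ) : theta a (b-2) z τ = theta a b (z-1) τ := by
  apply tsum_congr; intro n; congr 1; push_cast; ring

lemma theta0_add_one (b : ℝ) (z τ : ℂ) : theta 0 b (z+1) τ = theta 0 b z τ := by
  apply tsum_congr; intro n
  calc Complex.exp ((Real.pi : ℂ) * Complex.I * (((0:ℝ) : ℂ)/2 + (n : ℂ))^2 * τ +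
        2 * (Real.pi : ℂ) * Complex.I * (((0:ℝ) : ℂ)/2 + (n : ℂ)) * ((b : ℂ)/2 + (z+1)))
      = Complex.exp (((Real.pi : ℂ) * Complex.I * (((0:ℝ) : ℂ)/2 + (n : ℂ))^2 * τ +
        2 * (Real.pi : ℂ) * Complex.I * (((0:ℝ) : ℂ)/2 + (n : ℂ)) * ((b : ℂ)/2 + z)) +
        (n : ℂ) * (2 * (Real.pi:ℂ) * Complex.I)) := by congr 1; push_cast; ring
    _ = _ := by rw [Complex.exp_add, Complex.exp_int_mul_two_pi_mul_I, mul_one]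

lemma theta1_add_one (b : ℝ) (z τ : ℂ) : theta 1 b (z+1) τ = -theta 1 b z τ := by
  rw [theta, theta, ← tsum_neg]
  apply tsum_congr; intro n
  calc Complex.exp ((Real.pi : ℂ) * Complex.I * (((1:ℝ) : ℂ)/2 + (n : ℂ))^2 * τ +
        2 * (Real.pi : ℂ) * Complex.I * (((1:ℝ) : ℂ)/2 + (n : ℂ)) * ((b : ℂ)/2 + (z+1)))
      = Complex.exp (((Real.pi : ℂ) * Complex.I * (((1:ℝ) : ℂ)/2 + (n : ℂ))^2 * τ +
        2 * (Real.pi : ℂ) * Complex.I * (((1:ℝ) : ℂ)/2 + (n : ℂ)) * ((b : ℂ)/2 + z)) +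
        ((n : ℂ) * (2 * (Real.pi:ℂ) * Complex.I) + (Real.pi:ℂ) * Complex.I)) := by
        congr 1; push_cast; ring
    _ = _ := by
        rw [Complex.exp_add, Complex.exp_add, Complex.exp_add, Complex.exp_int_mul_two_pi_mul_I,
          Complex.exp_pi_mul_I]
        ring

lemma theta11_neg (z τ : ℂ) : theta 1 1 (-z) τ = -theta 1 1 z τ := by
  rw [theta, theta, ← tsum_neg, ← (Equiv.subLeft (-1 : ℤ)).tsum_eq]
  apply tsum_congr; intro n
  simp only [Equiv.subLeft_apply]
  calc Complex.exp ((Real.pi : ℂ) * Complex.I * (((1:ℝ) : ℂ)/2 + ((-1 - n : ℤ) : ℂ))^2 * τ +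
        2 * (Real.pi : ℂ) * Complex.I * (((1:ℝ) : ℂ)/2 + ((-1 - n : ℤ) : ℂ)) * (((1:ℝ) : ℂ)/2 + -z))
      = Complex.exp (((Real.pi : ℂ) * Complex.I * (((1:ℝ) : ℂ)/2 + (n : ℂ))^2 * τ +
        2 * (Real.pi : ℂ) * Complex.I * (((1:ℝ) : ℂ)/2 + (n : ℂ)) * (((1:ℝ) : ℂ)/2 + z)) +
        (((-n-1 : ℤ) : ℂ) * (2 * (Real.pi:ℂ) * Complex.I) + (Real.pi:ℂ) * Complex.I)) := by
        congr 1; push_cast; ring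
    _ = _ := by
        rw [Complex.exp_add, Complex.exp_add, Complex.exp_add, Complex.exp_int_mul_two_pi_mul_I,
          Complex.exp_pi_mul_I]
        ring

def evenSet : Set (ℤ × ℤ) := {nm | Even (nm.1 + nm.2)}

def evenEquiv : ℤ × ℤ ≃ evenSet where
  toFun pq := ⟨(pq.1 + pq.2, pq.1 - pq.2), ⟨pq.1, by dsimp; ring⟩⟩
  invFun s := ((s.1.1 + s.1.2)/2, (s.1.1 - s.1.2)/2)
  left_inv pq := by obtain ⟨p, q⟩ := pq; simp only; ext <;> dsimp <;> omega
  right_inv s := by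
    obtain ⟨⟨n, m⟩, hnm⟩ := s
    obtain ⟨r, hr⟩ := hnm
    simp only [Subtype.ext_iff]
    ext <;> dsimp at hr ⊢ <;> omega

def oddEquiv : ℤ × ℤ ≃ (evenSetᶜ : Set (ℤ × ℤ)) where
  toFun pq := ⟨(pq.1 + pq.2 + 1, pq.1 - pq.2), by
    simp only [Set.mem_compl_iff, evenSet, Set.mem_setOf_eq, Int.even_iff]
    omega⟩
  invFun s := ((s.1.1 + s.1.2 - 1)/2, (s.1.1 - s.1.2 - 1)/2)
  left_inv pq := by obtain ⟨p, q⟩ := pq; simp only; ext <;> dsimp <;> omega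
  right_inv s := by
    obtain ⟨⟨n, m⟩, hnm⟩ := s
    simp only [Set.mem_compl_iff, evenSet, Set.mem_setOf_eq, Int.even_iff] at hnm
    simp only [Subtype.ext_iff]
    ext <;> dsimp <;> omega

lemma key_even (b b' : ℝ) (x y τ : ℂ) (p q : ℤ) :
    thetaTerm 0 b x (τ/2) (p+q) * thetaTerm 0 b' y (τ/2) (p-q)
      = thetaTerm 0 (b+b') (x+y) τ p * thetaTerm 0 (b-b') (x-y) τ q := by
  simp only [thetaTerm, ← Complex.exp_add]
  congr 1; push_cast; ring

lemma key_odd (b b' : ℝ) (x y τ : ℂ) (p q : ℤ) :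
    thetaTerm 0 b x (τ/2) (p+q+1) * thetaTerm 0 b' y (τ/2) (p-q)
      = thetaTerm 1 (b+b') (x+y) τ p * thetaTerm 1 (b-b') (x-y) τ q := by
  simp only [thetaTerm, ← Complex.exp_add]
  congr 1; push_cast; ring

lemma master (b b' : ℝ) (x y : ℂ) {τ : ℂ} (hτ : 0 < τ.im) :
    theta 0 b x (τ/2) * theta 0 b' y (τ/2)
      = theta 0 (b+b') (x+y) τ * theta 0 (b-b') (x-y) τ
      + theta 1 (b+b') (x+y) τ * theta 1 (b-b') (x-y) τ := by
  have h2 : 0 < (τ/2).im := by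
    rw [div_ofNat_im]; positivity
  set f : ℤ × ℤ → ℂ := fun nm => thetaTerm 0 b x (τ/2) nm.1 * thetaTerm 0 b' y (τ/2) nm.2 with hf
  have hL : HasSum f (theta 0 b x (τ/2) * theta 0 b' y (τ/2)) :=
    (hasSum_theta h2 0 b x).mul (hasSum_theta h2 0 b' y)
      (summable_mul_of_summable_norm (summable_norm_thetaTerm h2 0 b x)
        (summable_norm_thetaTerm h2 0 b' y))
  have hE : HasSum (f ∘ ((↑) : evenSet → ℤ × ℤ))
      (theta 0 (b+b') (x+y) τ * theta 0 (b-b') (x-y) τ) := by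
    rw [← Equiv.hasSum_iff evenEquiv]
    have : (f ∘ ((↑) : evenSet → ℤ × ℤ)) ∘ evenEquiv
        = fun pq : ℤ × ℤ => thetaTerm 0 (b+b') (x+y) τ pq.1 * thetaTerm 0 (b-b') (x-y) τ pq.2 := by
      funext pq
      simp only [Function.comp_apply, hf, evenEquiv, Equiv.coe_fn_mk]
      exact key_even b b' x y τ pq.1 pq.2
    rw [this]
    exact (hasSum_theta hτ 0 (b+b') (x+y)).mul (hasSum_theta hτ 0 (b-b') (x-y))
      (summable_mul_of_summable_norm (summable_norm_thetaTerm hτ _ _ _)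
        (summable_norm_thetaTerm hτ _ _ _))
  have hO : HasSum (f ∘ ((↑) : (evenSetᶜ : Set (ℤ×ℤ)) → ℤ × ℤ))
      (theta 1 (b+b') (x+y) τ * theta 1 (b-b') (x-y) τ) := by
    rw [← Equiv.hasSum_iff oddEquiv]
    have : (f ∘ ((↑) : (evenSetᶜ : Set (ℤ×ℤ)) → ℤ × ℤ)) ∘ oddEquiv
        = fun pq : ℤ × ℤ => thetaTerm 1 (b+b') (x+y) τ pq.1 * thetaTerm 1 (b-b') (x-y) τ pq.2 := by
      funext pq
      simp only [Function.comp_apply, hf, oddEquiv, Equiv.coe_fn_mk]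
      exact key_odd b b' x y τ pq.1 pq.2
    rw [this]
    exact (hasSum_theta hτ 1 (b+b') (x+y)).mul (hasSum_theta hτ 1 (b-b') (x-y))
      (summable_mul_of_summable_norm (summable_norm_thetaTerm hτ _ _ _)
        (summable_norm_thetaTerm hτ _ _ _))
  exact hL.unique (HasSum.add_isCompl isCompl_compl hE hO)

lemma M00 (x y : ℂ) {τ : ℂ} (hτ : 0 < τ.im) :
    theta 0 0 x (τ/2) * theta 0 0 y (τ/2)
      = theta 0 0 (x+y) τ * theta 0 0 (x-y) τ + theta 1 0 (x+y) τ * theta 1 0 (x-y) τ := by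
  have := master 0 0 x y hτ
  norm_num at this
  exact this

lemma M11 (x y : ℂ) {τ : ℂ} (hτ : 0 < τ.im) :
    theta 0 1 x (τ/2) * theta 0 1 y (τ/2)
      = theta 0 0 (x+y) τ * theta 0 0 (x-y) τ - theta 1 0 (x+y) τ * theta 1 0 (x-y) τ := by
  have h := master 1 1 x y hτ
  norm_num at h
  rw [show (2:ℝ) = 0 + 2 by norm_num, theta_b_add_two, theta_b_add_two,
    theta0_add_one, theta1_add_one] at h
  linear_combination h

lemma M10 (x y : ℂ) {τ : ℂ} (hτ : 0 < τ.im) :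
    theta 0 1 x (τ/2) * theta 0 0 y (τ/2)
      = theta 0 1 (x+y) τ * theta 0 1 (x-y) τ + theta 1 1 (x+y) τ * theta 1 1 (x-y) τ := by
  have h := master 1 0 x y hτ
  norm_num at h
  exact h

lemma M01 (x y : ℂ) {τ : ℂ} (hτ : 0 < τ.im) :
    theta 0 0 x (τ/2) * theta 0 1 y (τ/2)
      = theta 0 1 (x+y) τ * theta 0 1 (x-y) τ - theta 1 1 (x+y) τ * theta 1 1 (x-y) τ := by
  have h := master 0 1 x y hτ
  norm_num at h
  have e1 : theta 0 (-1 : ℝ) (x-y) τ = theta 0 1 (x-y) τ := by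
    rw [show (-1:ℝ) = 1-2 by norm_num, theta_b_sub_two]
    have h2 := theta0_add_one 1 (x-y-1) τ
    rw [show (x-y-1+1 : ℂ) = x-y by ring] at h2
    exact h2.symm
  have e2 : theta 1 (-1 : ℝ) (x-y) τ = -theta 1 1 (x-y) τ := by
    rw [show (-1:ℝ) = 1-2 by norm_num, theta_b_sub_two]
    have h2 := theta1_add_one 1 (x-y-1) τ
    rw [show (x-y-1+1 : ℂ) = x-y by ring] at h2
    linear_combination h2
  rw [e1, e2] at h
  linear_combination h

lemma S00 (x y : ℂ) {τ : ℂ} (hτ : 0 < τ.im) :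
    theta 0 0 (x+y) τ * theta 0 0 (x-y) τ
      = (theta 0 0 x (τ/2) * theta 0 0 y (τ/2) + theta 0 1 x (τ/2) * theta 0 1 y (τ/2))/2 := by
  linear_combination -(M00 x y hτ + M11 x y hτ)/2

lemma S10 (x y : ℂ) {τ : ℂ} (hτ : 0 < τ.im) :
    theta 1 0 (x+y) τ * theta 1 0 (x-y) τ
      = (theta 0 0 x (τ/2) * theta 0 0 y (τ/2) - theta 0 1 x (τ/2) * theta 0 1 y (τ/2))/2 := by
  linear_combination -(M00 x y hτ - M11 x y hτ)/2

lemma S01 (x y : ℂ) {τ : ℂ} (hτ : 0 < τ.im) :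
    theta 0 1 (x+y) τ * theta 0 1 (x-y) τ
      = (theta 0 1 x (τ/2) * theta 0 0 y (τ/2) + theta 0 0 x (τ/2) * theta 0 1 y (τ/2))/2 := by
  linear_combination -(M10 x y hτ + M01 x y hτ)/2

lemma S11 (x y : ℂ) {τ : ℂ} (hτ : 0 < τ.im) :
    theta 1 1 (x+y) τ * theta 1 1 (x-y) τ
      = (theta 0 1 x (τ/2) * theta 0 0 y (τ/2) - theta 0 0 x (τ/2) * theta 0 1 y (τ/2))/2 := by
  linear_combination -(M10 x y hτ - M01 x y hτ)/2

lemma K1 (p q x y : ℂ) {τ : ℂ} (hτ : 0 < τ.im) :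
    theta 1 1 (p+q) τ * theta 1 1 (p-q) τ * (theta 1 1 (x+y) τ * theta 1 1 (x-y) τ)
    + theta 1 0 (p+q) τ * theta 1 0 (p-q) τ * (theta 1 0 (x+y) τ * theta 1 0 (x-y) τ)
    - theta 0 0 (p+q) τ * theta 0 0 (p-q) τ * (theta 0 0 (x+y) τ * theta 0 0 (x-y) τ)
    + theta 0 1 (p+q) τ * theta 0 1 (p-q) τ * (theta 0 1 (x+y) τ * theta 0 1 (x-y) τ)
    = -2 * (theta 1 1 (q+x) τ * theta 1 1 (q-x) τ) * (theta 1 1 (p+y) τ * theta 1 1 (p-y) τ) := by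
  linear_combination
    (theta 1 1 (x+y) τ * theta 1 1 (x-y) τ) * S11 p q hτ
    + ((theta 0 1 p (τ/2) * theta 0 0 q (τ/2) - theta 0 0 p (τ/2) * theta 0 1 q (τ/2))/2) * S11 x y hτ
    + (theta 1 0 (x+y) τ * theta 1 0 (x-y) τ) * S10 p q hτ
    + ((theta 0 0 p (τ/2) * theta 0 0 q (τ/2) - theta 0 1 p (τ/2) * theta 0 1 q (τ/2))/2) * S10 x y hτ
    - (theta 0 0 (x+y) τ * theta 0 0 (x-y) τ) * S00 p q hτ
    - ((theta 0 0 p (τ/2) * theta 0 0 q (τ/2) + theta 0 1 p (τ/2) * theta 0 1 q (τ/2))/2) * S00 x y hτ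
    + (theta 0 1 (x+y) τ * theta 0 1 (x-y) τ) * S01 p q hτ
    + ((theta 0 1 p (τ/2) * theta 0 0 q (τ/2) + theta 0 0 p (τ/2) * theta 0 1 q (τ/2))/2) * S01 x y hτ
    + 2 * (theta 1 1 (p+y) τ * theta 1 1 (p-y) τ) * S11 q x hτ
    + 2 * ((theta 0 1 q (τ/2) * theta 0 0 x (τ/2) - theta 0 0 q (τ/2) * theta 0 1 x (τ/2))/2) * S11 p y hτ

lemma K2 (x y m n : ℂ) {τ : ℂ} (hτ : 0 < τ.im) :
    theta 1 1 (x+m) τ * theta 1 1 (x-m) τ * (theta 1 1 (y+n) τ * theta 1 1 (y-n) τ)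
    - theta 1 1 (y+m) τ * theta 1 1 (y-m) τ * (theta 1 1 (x+n) τ * theta 1 1 (x-n) τ)
    = theta 1 1 (x+y) τ * theta 1 1 (x-y) τ * (theta 1 1 (m+n) τ * theta 1 1 (m-n) τ) := by
  linear_combination
    (theta 1 1 (y+n) τ * theta 1 1 (y-n) τ) * S11 x m hτ
    + ((theta 0 1 x (τ/2) * theta 0 0 m (τ/2) - theta 0 0 x (τ/2) * theta 0 1 m (τ/2))/2) * S11 y n hτ
    - (theta 1 1 (x+n) τ * theta 1 1 (x-n) τ) * S11 y m hτ
    - ((theta 0 1 y (τ/2) * theta 0 0 m (τ/2) - theta 0 0 y (τ/2) * theta 0 1 m (τ/2))/2) * S11 x n hτ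
    - (theta 1 1 (m+n) τ * theta 1 1 (m-n) τ) * S11 x y hτ
    - ((theta 0 1 x (τ/2) * theta 0 0 y (τ/2) - theta 0 0 x (τ/2) * theta 0 1 y (τ/2))/2) * S11 m n hτ

def brKmid (η τ z c : ℂ) (k : ℕ) : ℂ :=
  ∏ j ∈ Finset.range k,
    theta 1 1 (z + c + (2*(j:ℂ)+1)*η) τ * theta 1 1 (-z + c + (2*(j:ℂ)+1)*η) τ

lemma brK_up (η τ z c : ℂ) (k : ℕ) :
    brK η τ (z+η) c (k+1)
      = theta 1 1 (-z+c-η) τ * theta 1 1 (z+c+(2*(k:ℂ)+1)*η) τ * brKmid η τ z c k := by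
  have hA : (∏ j ∈ Finset.range (k+1), theta 1 1 ((z+η) + c + 2*(j:ℂ)*η) τ)
      = (∏ j ∈ Finset.range k, theta 1 1 (z + c + (2*(j:ℂ)+1)*η) τ) *
        theta 1 1 (z+c+(2*(k:ℂ)+1)*η) τ := by
    rw [Finset.prod_range_succ]
    congr 1
    · exact Finset.prod_congr rfl fun j _ => by congr 1; ring
    · congr 1; ring
  have hB : (∏ j ∈ Finset.range (k+1), theta 1 1 (-(z+η) + c + 2*(j:ℂ)*η) τ)
      = theta 1 1 (-z+c-η) τ * ∏ j ∈ Finset.range k, theta 1 1 (-z + c + (2*(j:ℂ)+1)*η) τ := by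
    rw [Finset.prod_range_succ']
    rw [mul_comm]
    congr 1
    · congr 1; push_cast; ring
    · exact Finset.prod_congr rfl fun j _ => by congr 1; push_cast; ring
  rw [brK, brKmid, Finset.prod_mul_distrib, Finset.prod_mul_distrib, hA, hB]
  ring

lemma brK_down (η τ z c : ℂ) (k : ℕ) :
    brK η τ (z-η) c (k+1)
      = theta 1 1 (z+c-η) τ * theta 1 1 (-z+c+(2*(k:ℂ)+1)*η) τ * brKmid η τ z c k := by
  have hA : (∏ j ∈ Finset.range (k+1), theta 1 1 ((z-η) + c + 2*(j:ℂ)*η) τ)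
      = theta 1 1 (z+c-η) τ * ∏ j ∈ Finset.range k, theta 1 1 (z + c + (2*(j:ℂ)+1)*η) τ := by
    rw [Finset.prod_range_succ']
    rw [mul_comm]
    congr 1
    · congr 1; push_cast; ring
    · exact Finset.prod_congr rfl fun j _ => by congr 1; push_cast; ring
  have hB : (∏ j ∈ Finset.range (k+1), theta 1 1 (-(z-η) + c + 2*(j:ℂ)*η) τ)
      = (∏ j ∈ Finset.range k, theta 1 1 (-z + c + (2*(j:ℂ)+1)*η) τ) *
        theta 1 1 (-z+c+(2*(k:ℂ)+1)*η) τ := by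
    rw [Finset.prod_range_succ]
    congr 1
    · exact Finset.prod_congr rfl fun j _ => by congr 1; ring
    · congr 1; ring
  rw [brK, brKmid, Finset.prod_mul_distrib, Finset.prod_mul_distrib, hA, hB]
  ring

lemma brK_mid (η τ z c : ℂ) (k : ℕ) :
    brK η τ z (c+η) (k+1)
      = theta 1 1 (z+c+(2*(k:ℂ)+1)*η) τ * theta 1 1 (-z+c+(2*(k:ℂ)+1)*η) τ * brKmid η τ z c k := by
  have hA : (∏ j ∈ Finset.range (k+1), theta 1 1 (z + (c+η) + 2*(j:ℂ)*η) τ)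
      = (∏ j ∈ Finset.range k, theta 1 1 (z + c + (2*(j:ℂ)+1)*η) τ) *
        theta 1 1 (z+c+(2*(k:ℂ)+1)*η) τ := by
    rw [Finset.prod_range_succ]
    congr 1
    · exact Finset.prod_congr rfl fun j _ => by congr 1; ring
    · congr 1; ring
  have hB : (∏ j ∈ Finset.range (k+1), theta 1 1 (-z + (c+η) + 2*(j:ℂ)*η) τ)
      = (∏ j ∈ Finset.range k, theta 1 1 (-z + c + (2*(j:ℂ)+1)*η) τ) *
        theta 1 1 (-z+c+(2*(k:ℂ)+1)*η) τ := by
    rw [Finset.prod_range_succ]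
    congr 1
    · exact Finset.prod_congr rfl fun j _ => by congr 1; ring
    · congr 1; ring
  rw [brK, brKmid, Finset.prod_mul_distrib, Finset.prod_mul_distrib, hA, hB]
  ring

/-- The coefficient function `P(w)`. -/
def Pfun (η τ l u lam lamp v w : ℂ) : ℂ :=
  theta 1 1 u τ * theta 1 1 (2*w - 2*l*η) τ *
    (theta 0 1 ((lamp-v)/2) (τ/2) * theta 0 0 ((lam+v)/2) (τ/2)
     - theta 0 0 ((lamp-v)/2) (τ/2) * theta 0 1 ((lam+v)/2) (τ/2))
  + theta 1 0 u τ * theta 1 0 (2*w - 2*l*η) τ *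
    (theta 0 0 ((lamp-v)/2) (τ/2) * theta 0 0 ((lam+v)/2) (τ/2)
     - theta 0 1 ((lamp-v)/2) (τ/2) * theta 0 1 ((lam+v)/2) (τ/2))
  - theta 0 0 u τ * theta 0 0 (2*w - 2*l*η) τ *
    (theta 0 0 ((lamp-v)/2) (τ/2) * theta 0 0 ((lam+v)/2) (τ/2)
     + theta 0 1 ((lamp-v)/2) (τ/2) * theta 0 1 ((lam+v)/2) (τ/2))
  + theta 0 1 u τ * theta 0 1 (2*w - 2*l*η) τ *
    (theta 0 1 ((lamp-v)/2) (τ/2) * theta 0 0 ((lam+v)/2) (τ/2)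
     + theta 0 0 ((lamp-v)/2) (τ/2) * theta 0 1 ((lam+v)/2) (τ/2))

set_option maxHeartbeats 1000000 in
lemma entry_eq (η τ l u lam lamp v : ℂ)
    (h11 : theta 1 1 η τ ≠ 0) (h10 : theta 1 0 η τ ≠ 0)
    (h00 : theta 0 0 η τ ≠ 0) (h01 : theta 0 1 η τ ≠ 0)
    (f : ℂ → ℂ) (z : ℂ) (hz : theta 1 1 (2*z) τ ≠ 0) :
    theta 1 1 (2*z) τ *
      ((((Mlam τ lamp v).adjugate).map (algebraMap ℂ (Module.End ℂ (ℂ → ℂ))) *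
        LopM η τ l u *
        (Mlam τ lam v).map (algebraMap ℂ (Module.End ℂ (ℂ → ℂ)))) 1 1 f z)
    = Pfun η τ l u lam lamp v z * f (z+η) - Pfun η τ l u lam lamp v (-z) * f (z-η) := by
  simp only [Matrix.mul_apply, Fin.sum_univ_two, Matrix.map_apply, Matrix.adjugate_fin_two,
    Mlam, LopM, Matrix.cons_val', Matrix.cons_val_zero, Matrix.cons_val_one, Matrix.head_cons,
    Matrix.empty_val', Matrix.cons_val_fin_one, Matrix.head_fin_const, Matrix.of_apply]
  simp only [Module.End.mul_apply, LinearMap.add_apply, LinearMap.sub_apply,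
    LinearMap.smul_apply, Module.algebraMap_end_apply, Pi.add_apply, Pi.sub_apply,
    Pi.smul_apply, smul_eq_mul, map_add, map_sub, map_smul]
  simp only [rhoS, LinearMap.coe_mk, AddHom.coe_mk, Pi.smul_apply, smul_eq_mul]
  simp only [mul_div_assoc', ← add_div, div_sub_div_same, neg_div]
  rw [mul_comm (theta 1 1 (2*z) τ), mul_div_cancel_right₀ _ hz]
  simp only [Pfun, W0, W1, W2, W3, s0f, s1f, s2f, s3f]
  field_simp [h11, h10, h00, h01]
  ring_nf
  simp only [Complex.I_sq]
  ring

lemma detMlam (lamp v : ℂ) {τ : ℂ} (hτ : 0 < τ.im) :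
    (Mlam τ lamp v).det = -2 * theta 1 1 lamp τ * theta 1 1 v τ := by
  rw [Mlam, Matrix.det_fin_two_of]
  have h := S11 ((lamp-v)/2) ((lamp+v)/2) hτ
  have hodd := theta11_neg v τ
  linear_combination (norm := ring_nf) (-2 : ℂ) * h + (2 * theta 1 1 lamp τ) * hodd

set_option maxHeartbeats 2000000 in
lemma KEY (τ η l u lam v z ε : ℂ) (hτ : 0 < τ.im) (hε : ε = 1 ∨ ε = -1) :
    theta 1 1 (lam + 4*ε*l*η) τ *
      (Pfun η τ l u lam (lam + 4*ε*l*η) v z *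
         (theta 1 1 (-z + (ε*lam+u-ε*v)/2 - l*η) τ * theta 1 1 (z + (ε*lam+u-ε*v)/2 + 3*l*η) τ)
       - Pfun η τ l u lam (lam + 4*ε*l*η) v (-z) *
         (theta 1 1 (z + (ε*lam+u-ε*v)/2 - l*η) τ * theta 1 1 (-z + (ε*lam+u-ε*v)/2 + 3*l*η) τ))
    = -2 * theta 1 1 (lam + 4*ε*l*η) τ * theta 1 1 v τ * (2 * theta 1 1 (u - 2*l*η) τ) *
      theta 1 1 lam τ * theta 1 1 (2*z) τ *
      (theta 1 1 (z + (ε*lam+u-ε*v)/2 + 3*l*η) τ *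
       theta 1 1 (-z + (ε*lam+u-ε*v)/2 + 3*l*η) τ) := by
  have hS11 := S11 ((lam + 4*ε*l*η - v)/2) ((lam+v)/2) hτ
  have hS10 := S10 ((lam + 4*ε*l*η - v)/2) ((lam+v)/2) hτ
  have hS00 := S00 ((lam + 4*ε*l*η - v)/2) ((lam+v)/2) hτ
  have hS01 := S01 ((lam + 4*ε*l*η - v)/2) ((lam+v)/2) hτ
  have hQ1 := K1 (z + u/2 - l*η) (u/2 - z + l*η) ((lam + 4*ε*l*η - v)/2) ((lam+v)/2) hτ
  have hQ2 := K1 (-z + u/2 - l*η) (u/2 + z + l*η) ((lam + 4*ε*l*η - v)/2) ((lam+v)/2) hτ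
  have hW := K2 (z + u/2 - l*η) (-z + u/2 - l*η) ((lam+v)/2) ((lam-v)/2) hτ
  simp only [Pfun]
  rcases hε with rfl | rfl
  · linear_combination (norm := ring_nf)
        (-2 * theta 1 1 (lam + 4*(1:ℂ)*l*η) τ *
          ((theta 1 1 (-z + ((1:ℂ)*lam+u-(1:ℂ)*v)/2 - l*η) τ * theta 1 1 (z + ((1:ℂ)*lam+u-(1:ℂ)*v)/2 + 3*l*η) τ) *
            (theta 1 1 u τ * theta 1 1 (2*z - 2*l*η) τ)
           - (theta 1 1 (z + ((1:ℂ)*lam+u-(1:ℂ)*v)/2 - l*η) τ * theta 1 1 (-z + ((1:ℂ)*lam+u-(1:ℂ)*v)/2 + 3*l*η) τ) *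
            (theta 1 1 u τ * theta 1 1 (-2*z - 2*l*η) τ))) * hS11
      + (-2 * theta 1 1 (lam + 4*(1:ℂ)*l*η) τ *
          ((theta 1 1 (-z + ((1:ℂ)*lam+u-(1:ℂ)*v)/2 - l*η) τ * theta 1 1 (z + ((1:ℂ)*lam+u-(1:ℂ)*v)/2 + 3*l*η) τ) *
            (theta 1 0 u τ * theta 1 0 (2*z - 2*l*η) τ)
           - (theta 1 1 (z + ((1:ℂ)*lam+u-(1:ℂ)*v)/2 - l*η) τ * theta 1 1 (-z + ((1:ℂ)*lam+u-(1:ℂ)*v)/2 + 3*l*η) τ) *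
            (theta 1 0 u τ * theta 1 0 (-2*z - 2*l*η) τ))) * hS10
      + (2 * theta 1 1 (lam + 4*(1:ℂ)*l*η) τ *
          ((theta 1 1 (-z + ((1:ℂ)*lam+u-(1:ℂ)*v)/2 - l*η) τ * theta 1 1 (z + ((1:ℂ)*lam+u-(1:ℂ)*v)/2 + 3*l*η) τ) *
            (theta 0 0 u τ * theta 0 0 (2*z - 2*l*η) τ)
           - (theta 1 1 (z + ((1:ℂ)*lam+u-(1:ℂ)*v)/2 - l*η) τ * theta 1 1 (-z + ((1:ℂ)*lam+u-(1:ℂ)*v)/2 + 3*l*η) τ) *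
            (theta 0 0 u τ * theta 0 0 (-2*z - 2*l*η) τ))) * hS00
      + (-2 * theta 1 1 (lam + 4*(1:ℂ)*l*η) τ *
          ((theta 1 1 (-z + ((1:ℂ)*lam+u-(1:ℂ)*v)/2 - l*η) τ * theta 1 1 (z + ((1:ℂ)*lam+u-(1:ℂ)*v)/2 + 3*l*η) τ) *
            (theta 0 1 u τ * theta 0 1 (2*z - 2*l*η) τ)
           - (theta 1 1 (z + ((1:ℂ)*lam+u-(1:ℂ)*v)/2 - l*η) τ * theta 1 1 (-z + ((1:ℂ)*lam+u-(1:ℂ)*v)/2 + 3*l*η) τ) *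
            (theta 0 1 u τ * theta 0 1 (-2*z - 2*l*η) τ))) * hS01
      + (2 * theta 1 1 (lam + 4*(1:ℂ)*l*η) τ *
          (theta 1 1 (-z + ((1:ℂ)*lam+u-(1:ℂ)*v)/2 - l*η) τ * theta 1 1 (z + ((1:ℂ)*lam+u-(1:ℂ)*v)/2 + 3*l*η) τ)) * hQ1
      - (2 * theta 1 1 (lam + 4*(1:ℂ)*l*η) τ *
          (theta 1 1 (z + ((1:ℂ)*lam+u-(1:ℂ)*v)/2 - l*η) τ * theta 1 1 (-z + ((1:ℂ)*lam+u-(1:ℂ)*v)/2 + 3*l*η) τ)) * hQ2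
      - (4 * theta 1 1 (lam + 4*(1:ℂ)*l*η) τ *
          (theta 1 1 (z + ((1:ℂ)*lam+u-(1:ℂ)*v)/2 + 3*l*η) τ * theta 1 1 (-z + ((1:ℂ)*lam+u-(1:ℂ)*v)/2 + 3*l*η) τ)) * hW
  · linear_combination (norm := ring_nf)
        (-2 * theta 1 1 (lam + 4*(-1:ℂ)*l*η) τ *
          ((theta 1 1 (-z + ((-1:ℂ)*lam+u-(-1:ℂ)*v)/2 - l*η) τ * theta 1 1 (z + ((-1:ℂ)*lam+u-(-1:ℂ)*v)/2 + 3*l*η) τ) *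
            (theta 1 1 u τ * theta 1 1 (2*z - 2*l*η) τ)
           - (theta 1 1 (z + ((-1:ℂ)*lam+u-(-1:ℂ)*v)/2 - l*η) τ * theta 1 1 (-z + ((-1:ℂ)*lam+u-(-1:ℂ)*v)/2 + 3*l*η) τ) *
            (theta 1 1 u τ * theta 1 1 (-2*z - 2*l*η) τ))) * hS11
      + (-2 * theta 1 1 (lam + 4*(-1:ℂ)*l*η) τ *
          ((theta 1 1 (-z + ((-1:ℂ)*lam+u-(-1:ℂ)*v)/2 - l*η) τ * theta 1 1 (z + ((-1:ℂ)*lam+u-(-1:ℂ)*v)/2 + 3*l*η) τ) *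
            (theta 1 0 u τ * theta 1 0 (2*z - 2*l*η) τ)
           - (theta 1 1 (z + ((-1:ℂ)*lam+u-(-1:ℂ)*v)/2 - l*η) τ * theta 1 1 (-z + ((-1:ℂ)*lam+u-(-1:ℂ)*v)/2 + 3*l*η) τ) *
            (theta 1 0 u τ * theta 1 0 (-2*z - 2*l*η) τ))) * hS10
      + (2 * theta 1 1 (lam + 4*(-1:ℂ)*l*η) τ *
          ((theta 1 1 (-z + ((-1:ℂ)*lam+u-(-1:ℂ)*v)/2 - l*η) τ * theta 1 1 (z + ((-1:ℂ)*lam+u-(-1:ℂ)*v)/2 + 3*l*η) τ) *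
            (theta 0 0 u τ * theta 0 0 (2*z - 2*l*η) τ)
           - (theta 1 1 (z + ((-1:ℂ)*lam+u-(-1:ℂ)*v)/2 - l*η) τ * theta 1 1 (-z + ((-1:ℂ)*lam+u-(-1:ℂ)*v)/2 + 3*l*η) τ) *
            (theta 0 0 u τ * theta 0 0 (-2*z - 2*l*η) τ))) * hS00
      + (-2 * theta 1 1 (lam + 4*(-1:ℂ)*l*η) τ *
          ((theta 1 1 (-z + ((-1:ℂ)*lam+u-(-1:ℂ)*v)/2 - l*η) τ * theta 1 1 (z + ((-1:ℂ)*lam+u-(-1:ℂ)*v)/2 + 3*l*η) τ) *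
            (theta 0 1 u τ * theta 0 1 (2*z - 2*l*η) τ)
           - (theta 1 1 (z + ((-1:ℂ)*lam+u-(-1:ℂ)*v)/2 - l*η) τ * theta 1 1 (-z + ((-1:ℂ)*lam+u-(-1:ℂ)*v)/2 + 3*l*η) τ) *
            (theta 0 1 u τ * theta 0 1 (-2*z - 2*l*η) τ))) * hS01
      + (2 * theta 1 1 (lam + 4*(-1:ℂ)*l*η) τ *
          (theta 1 1 (-z + ((-1:ℂ)*lam+u-(-1:ℂ)*v)/2 - l*η) τ * theta 1 1 (z + ((-1:ℂ)*lam+u-(-1:ℂ)*v)/2 + 3*l*η) τ)) * hQ1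
      - (2 * theta 1 1 (lam + 4*(-1:ℂ)*l*η) τ *
          (theta 1 1 (z + ((-1:ℂ)*lam+u-(-1:ℂ)*v)/2 - l*η) τ * theta 1 1 (-z + ((-1:ℂ)*lam+u-(-1:ℂ)*v)/2 + 3*l*η) τ)) * hQ2
      - (4 * theta 1 1 (lam + 4*(-1:ℂ)*l*η) τ *
          (theta 1 1 (z + ((-1:ℂ)*lam+u-(-1:ℂ)*v)/2 + 3*l*η) τ * theta 1 1 (-z + ((-1:ℂ)*lam+u-(-1:ℂ)*v)/2 + 3*l*η) τ)) * hW

/-- The (2,2) entry of `N` acts on `ω_{ε(λ₀+4jlη)}(u;εv)` with factor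
`det M' · 2θ₁₁(u-2lη) · θ₁₁(λ₀+4jlη)/θ₁₁(λ₀+4(j+ε)lη)` and shift `u ↦ u+2η`. -/
theorem stmt18 (τ : ℂ) (hτ : 0 < τ.im) (η l : ℂ) (tl : ℕ) (htl : 0 < tl)
    (hl : (tl:ℂ) = 2*l)
    (lam0 v u : ℂ) (j : ℤ) (ε : ℂ) (hε : ε = 1 ∨ ε = -1)
    (h11 : theta 1 1 η τ ≠ 0) (h10 : theta 1 0 η τ ≠ 0)
    (h00 : theta 0 0 η τ ≠ 0) (h01 : theta 0 1 η τ ≠ 0) :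
    ∀ z : ℂ, theta 1 1 (2*z) τ ≠ 0 →
      theta 1 1 (lam0 + 4*((j:ℂ)+ε)*l*η) τ *
        ((NMat η τ l lam0 v u j ε 1 1)
          (fun w => omegaFn η τ l tl (ε*(lam0 + 4*(j:ℂ)*l*η)) u (ε*v) w) z)
      = (Mlam τ (lam0 + 4*((j:ℂ)+ε)*l*η) v).det * (2 * theta 1 1 (u - 2*l*η) τ) *
          theta 1 1 (lam0 + 4*(j:ℂ)*l*η) τ *
          omegaFn η τ l tl (ε*(lam0 + 4*(j:ℂ)*l*η)) (u + 2*η) (ε*v) z := by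
  intro z hz
  obtain ⟨k, rfl⟩ : ∃ k, tl = k + 1 := ⟨tl - 1, (Nat.succ_pred_eq_of_pos htl).symm⟩
  push_cast at hl
  have hls : l = ((k:ℂ)+1)/2 := by linear_combination -hl/2
  subst hls
  have hK := KEY τ η (((k:ℂ)+1)/2) u (lam0 + 4*(j:ℂ)*(((k:ℂ)+1)/2)*η) v z ε hτ hε
  have hdet := detMlam (lam0 + 4*((j:ℂ)+ε)*(((k:ℂ)+1)/2)*η) v hτ
  have ht1 := brK_up η τ z ((ε*(lam0 + 4*(j:ℂ)*(((k:ℂ)+1)/2)*η) + u - ε*v)/2 + (-(((k:ℂ)+1)/2)+1)*η) k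
  have ht2 := brK_down η τ z ((ε*(lam0 + 4*(j:ℂ)*(((k:ℂ)+1)/2)*η) + u - ε*v)/2 + (-(((k:ℂ)+1)/2)+1)*η) k
  have ht3 := brK_mid η τ z ((ε*(lam0 + 4*(j:ℂ)*(((k:ℂ)+1)/2)*η) + u - ε*v)/2 + (-(((k:ℂ)+1)/2)+1)*η) k
  have hE := entry_eq η τ (((k:ℂ)+1)/2) u (lam0 + 4*(j:ℂ)*(((k:ℂ)+1)/2)*η) (lam0 + 4*((j:ℂ)+ε)*(((k:ℂ)+1)/2)*η) v h11 h10 h00 h01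
      (fun w => omegaFn η τ (((k:ℂ)+1)/2) (k+1) (ε*(lam0 + 4*(j:ℂ)*(((k:ℂ)+1)/2)*η)) u (ε*v) w) z hz
  simp only [omegaFn] at hE ⊢
  refine mul_left_cancel₀ hz ?_
  simp only [NMat]
  linear_combination (norm := ring_nf)
    (theta 1 1 (lam0 + 4*((j:ℂ)+ε)*(((k:ℂ)+1)/2)*η) τ) * hE
    + ((theta 1 1 (lam0 + 4*((j:ℂ)+ε)*(((k:ℂ)+1)/2)*η) τ) * (Pfun η τ (((k:ℂ)+1)/2) u (lam0 + 4*(j:ℂ)*(((k:ℂ)+1)/2)*η) (lam0 + 4*((j:ℂ)+ε)*(((k:ℂ)+1)/2)*η) v z)) * ht1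
    - ((theta 1 1 (lam0 + 4*((j:ℂ)+ε)*(((k:ℂ)+1)/2)*η) τ) * (Pfun η τ (((k:ℂ)+1)/2) u (lam0 + 4*(j:ℂ)*(((k:ℂ)+1)/2)*η) (lam0 + 4*((j:ℂ)+ε)*(((k:ℂ)+1)/2)*η) v (-z))) * ht2
    + (brKmid η τ z ((ε*(lam0 + 4*(j:ℂ)*(((k:ℂ)+1)/2)*η) + u - ε*v)/2 + (-(((k:ℂ)+1)/2)+1)*η) k) * hK
    + (2*(theta 1 1 (lam0 + 4*((j:ℂ)+ε)*(((k:ℂ)+1)/2)*η) τ)*theta 1 1 v τ*(2*(theta 1 1 (u - 2*(((k:ℂ)+1)/2)*η) τ))*(theta 1 1 (lam0 + 4*(j:ℂ)*(((k:ℂ)+1)/2)*η) τ)*theta 1 1 (2*z) τ) * ht3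
    + (-(theta 1 1 (2*z) τ)*(2*(theta 1 1 (u - 2*(((k:ℂ)+1)/2)*η) τ))*(theta 1 1 (lam0 + 4*(j:ℂ)*(((k:ℂ)+1)/2)*η) τ)*(brK η τ z ((ε*(lam0 + 4*(j:ℂ)*(((k:ℂ)+1)/2)*η) + (u+2*η) - ε*v)/2 + (-(((k:ℂ)+1)/2)+1)*η) (k+1))) * hdet
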